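/- Let z1, z2 be real numbers with z1 < 0 and z2 < 0. Then |R_DR(z1, z2)| < 1, where R_DR(z1, z2) = 1 + (z1 + z2)/((1 − z1)(1 − z2)). Consequently, for every real s ≥ 1, (R_DR(z1/s, z2/s))^s < 1. -/

import Mathlib

lemma DR_aux (a b : ℝ) (ha : a < 0) (hb : b < 0) :
    0 < 1 + (a + b) / ((1 - a) * (1 - b)) ∧
    1 + (a + b) / ((1 - a) * (1 - b)) < 1 := by
  have hd : 0 < (1 - a) * (1 - b) := by nlinarith
  constructor
  · have key : 1 + (a + b) / ((1 - a) * (1 - b)) = (1 + a * b) / ((1 - a) * (1 - b)) := by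
      rw [eq_div_iff hd.ne', add_mul, div_mul_cancel₀ _ hd.ne']; ring
    rw [key]
    exact div_pos (by nlinarith) hd
  · have : (a + b) / ((1 - a) * (1 - b)) < 0 := div_neg_of_neg_of_pos (by linarith) hd
    linarith

/-- `A`-stability of the Douglas–Rachford method on the negative real axis, and the
consequent bound on the powered stability function. -/
theorem DR_stability_bound (z1 z2 : ℝ) (h1 : z1 < 0) (h2 : z2 < 0) :
    |1 + (z1 + z2) / ((1 - z1) * (1 - z2))| < 1 ∧
    ∀ s : ℝ, 1 ≤ s →
      (1 + (z1 / s + z2 / s) / ((1 - z1 / s) * (1 - z2 / s))) ^ s < 1 := by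
  obtain ⟨hp, hl⟩ := DR_aux z1 z2 h1 h2
  refine ⟨abs_lt.mpr ⟨by linarith, hl⟩, fun s hs => ?_⟩
  have hs0 : 0 < s := lt_of_lt_of_le one_pos hs
  obtain ⟨hp', hl'⟩ := DR_aux (z1 / s) (z2 / s)
    (div_neg_of_neg_of_pos h1 hs0) (div_neg_of_neg_of_pos h2 hs0)
  exact Real.rpow_lt_one hp'.le hl' hs0
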